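/- Let r ≥ 2 and let u, w ∈ S_r. Then u•δ − w•δ ∈ (r−1)Q_r if and only if u = w or u = w∘τ, where τ ∈ S_r is the transposition swapping 1 and r. Moreover, if u = w∘τ then u•δ − w•δ = −(r−1)·(w•θ), where θ = ε_1 − ε_r is the highest root. -/

import Mathlib

open Finset

noncomputable section

/-- Inner product `⟨u,v⟩ = Σ_i u i * v i` on `ℚ^r`. -/
def ip {r : ℕ} (u v : Fin r → ℚ) : ℚ := ∑ i, u i * v i

/-- Action of `S_r` permuting coordinates: `(w • v) i = v (w⁻¹ i)`. -/
def pact {r : ℕ} (w : Equiv.Perm (Fin r)) (v : Fin r → ℚ) : Fin r → ℚ := fun i => v (w⁻¹ i)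

/-- The Weyl vector `δ`, whose (1-indexed) `i`-th coordinate is `(r+1-2i)/2`. -/
def weylδ (r : ℕ) : Fin r → ℚ := fun j => ((r : ℚ) - 1 - 2 * ((j : ℕ) : ℚ)) / 2

/-- Membership in `V = {v : Fin r → ℚ | Σ_i v i = 0}`. -/
def memV {r : ℕ} (v : Fin r → ℚ) : Prop := ∑ i, v i = 0

/-- Membership in the root lattice `Q_r`. -/
def memQ {r : ℕ} (v : Fin r → ℚ) : Prop := memV v ∧ ∀ i, ∃ m : ℤ, v i = (m : ℚ)

/-- Membership in the weight lattice `P_r`. -/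
def memP {r : ℕ} (v : Fin r → ℚ) : Prop := memV v ∧ ∀ i j, ∃ m : ℤ, v i - v j = (m : ℚ)

/-- The first fundamental weight `Λ₁ = ε₁ - (1/r)(ε₁ + ⋯ + ε_r)`. -/
def Lam1 (r : ℕ) : Fin r → ℚ := fun j => (if (j : ℕ) = 0 then 1 else 0) - 1 / (r : ℚ)

/-- The simple roots, 0-indexed: `srootF i = ε_{i+1} - ε_{i+2}` in 1-indexed notation. -/
def srootF {r : ℕ} (i : Fin (r - 1)) : Fin r → ℚ :=
  fun j => (if (j : ℕ) = (i : ℕ) then 1 else 0) - (if (j : ℕ) = (i : ℕ) + 1 then 1 else 0)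

/-- The highest root `θ = ε₁ - ε_r`. -/
def hroot (r : ℕ) : Fin r → ℚ :=
  fun j => (if (j : ℕ) = 0 then 1 else 0) - (if (j : ℕ) = r - 1 then 1 else 0)

/-- The set `Π_{r,n}` of weights of `L_r(nΛ₁)`:
all `nΛ₁ - a₁α₁ - ⋯ - a_{r-1}α_{r-1}` with `n ≥ a₁ ≥ ⋯ ≥ a_{r-1} ≥ 0`. -/
def PiWts (r n : ℕ) : Set (Fin r → ℚ) :=
  {v | ∃ a : Fin (r - 1) → ℤ, (∀ i, 0 ≤ a i) ∧ (∀ i, a i ≤ (n : ℤ)) ∧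
        (∀ i j, i ≤ j → a j ≤ a i) ∧
        v = (n : ℚ) • Lam1 r - ∑ i, (a i : ℚ) • srootF i}

/-- `u•δ - w•δ ∈ (r-1)Q_r` iff `u = w` or `u = w∘τ` with `τ = (1,r)`;
and in the latter case `u•δ - w•δ = -(r-1)·(w•θ)` with `θ = ε₁ - ε_r` the highest root. -/
lemma keyint (R a b k : ℤ) (hR : 1 ≤ R) (ha : 0 ≤ a) (ha' : a ≤ R) (hb : 0 ≤ b) (hb' : b ≤ R)
    (h : b - a = R * k) : a = b ∨ (a = 0 ∧ b = R) ∨ (a = R ∧ b = 0) := by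
  have h1 : -1 ≤ k := by nlinarith
  have h2 : k ≤ 1 := by nlinarith
  interval_cases k <;> omega

lemma sigma_cases {r : ℕ} (σ : Equiv.Perm (Fin r)) (z₀ z₁ : Fin r) (hz : z₀ ≠ z₁)
    (h : ∀ j, σ j = j ∨ (σ j = z₀ ∧ j = z₁) ∨ (σ j = z₁ ∧ j = z₀)) :
    σ = 1 ∨ σ = Equiv.swap z₀ z₁ := by
  rcases h z₀ with h0 | ⟨h0, h0'⟩ | ⟨h0, -⟩
  · left
    refine Equiv.ext fun j => ?_
    show σ j = j
    rcases h j with hj | ⟨hj, hj'⟩ | ⟨hj, hj'⟩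
    · exact hj
    · have hjz : j = z₀ := σ.injective (by rw [hj, h0])
      exact absurd (hjz.symm.trans hj') hz
    · subst hj'
      exact absurd (h0.symm.trans hj) hz
  · exact absurd h0' hz
  · right
    refine Equiv.ext fun j => ?_
    show σ j = Equiv.swap z₀ z₁ j
    rcases h j with hj | ⟨hj, hj'⟩ | ⟨hj, hj'⟩
    · have hj0 : j ≠ z₀ := by rintro rfl; exact hz (hj.symm.trans h0)
      have hj1 : j ≠ z₁ := by rintro rfl; exact hz (σ.injective (h0.trans hj.symm))
      rw [Equiv.swap_apply_of_ne_of_ne hj0 hj1]; exact hj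
    · subst hj'; rw [Equiv.swap_apply_right]; exact hj
    · subst hj'; rw [Equiv.swap_apply_left]; exact hj

lemma moreover (r : ℕ) (hr : 1 < r) (w : Equiv.Perm (Fin r)) :
    pact (w * Equiv.swap (⟨0, by omega⟩ : Fin r) (⟨r - 1, by omega⟩ : Fin r)) (weylδ r)
      - pact w (weylδ r) = (-((r : ℚ) - 1)) • pact w (hroot r) := by
  set z₀ : Fin r := ⟨0, by omega⟩ with hz₀
  set z₁ : Fin r := ⟨r - 1, by omega⟩ with hz₁
  have hv0 : (z₀ : ℕ) = 0 := rfl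
  have hv1 : (z₁ : ℕ) = r - 1 := rfl
  have A : weylδ r z₁ = -((r : ℚ) - 1) / 2 := by
    simp only [weylδ, hv1]
    rw [Nat.cast_sub (by omega : 1 ≤ r)]
    push_cast; ring
  have B : weylδ r z₀ = ((r : ℚ) - 1) / 2 := by
    simp only [weylδ, hv0]; push_cast; ring
  have C : hroot r z₀ = 1 := by
    simp only [hroot, hv0]
    rw [if_neg (by omega : ¬ (0 : ℕ) = r - 1)]; norm_num
  have D : hroot r z₁ = -1 := by
    simp only [hroot, hv1]
    rw [if_neg (by omega : ¬ r - 1 = 0)]; norm_num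
  funext i
  have hinv : (w * Equiv.swap z₀ z₁)⁻¹ i = Equiv.swap z₀ z₁ (w⁻¹ i) := by
    simp [mul_inv_rev, Equiv.swap_inv]
  simp only [Pi.sub_apply, Pi.smul_apply, pact, hinv, smul_eq_mul]
  rcases eq_or_ne (w⁻¹ i) z₀ with h0 | h0
  · rw [h0, Equiv.swap_apply_left, A, B, C]; ring
  · rcases eq_or_ne (w⁻¹ i) z₁ with h1 | h1
    · rw [h1, Equiv.swap_apply_right, A, B, D]; ring
    · rw [Equiv.swap_apply_of_ne_of_ne h0 h1]
      have E : hroot r (w⁻¹ i) = 0 := by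
        simp only [hroot]
        rw [if_neg fun e => h0 (Fin.ext (by rw [e, hv0])),
            if_neg fun e => h1 (Fin.ext (by rw [e, hv1]))]
        ring
      rw [E]; ring

lemma memQ_neg_hroot (r : ℕ) (hr : 2 ≤ r) (w : Equiv.Perm (Fin r)) :
    memQ (-pact w (hroot r)) := by
  constructor
  · show ∑ i, (-pact w (hroot r)) i = 0
    simp only [Pi.neg_apply, pact]
    rw [Finset.sum_neg_distrib, neg_eq_zero]
    rw [Equiv.sum_comp w⁻¹ (hroot r)]
    simp only [hroot]
    rw [Finset.sum_sub_distrib]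
    have e0 : ∑ j : Fin r, (if (j : ℕ) = 0 then (1 : ℚ) else 0) = 1 := by
      rw [Finset.sum_eq_single (⟨0, by omega⟩ : Fin r)]
      · simp
      · intro b _ hb
        rw [if_neg fun e => hb (Fin.ext e)]
      · simp
    have e1 : ∑ j : Fin r, (if (j : ℕ) = r - 1 then (1 : ℚ) else 0) = 1 := by
      rw [Finset.sum_eq_single (⟨r - 1, by omega⟩ : Fin r)]
      · simp
      · intro b _ hb
        rw [if_neg fun e => hb (Fin.ext e)]
      · simp
    rw [e0, e1, sub_self]
  · intro i
    refine ⟨-((if ((w⁻¹ i : Fin r) : ℕ) = 0 then 1 else 0)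
        - (if ((w⁻¹ i : Fin r) : ℕ) = r - 1 then 1 else 0)), ?_⟩
    simp only [Pi.neg_apply, pact, hroot]
    split_ifs <;> norm_num

theorem stmt9 (r : ℕ) (hr : 2 ≤ r) (u w : Equiv.Perm (Fin r)) :
    ((∃ β, memQ β ∧ pact u (weylδ r) - pact w (weylδ r) = ((r : ℚ) - 1) • β) ↔
      (u = w ∨ u = w * Equiv.swap (⟨0, by omega⟩ : Fin r) (⟨r - 1, by omega⟩ : Fin r))) ∧
    (u = w * Equiv.swap (⟨0, by omega⟩ : Fin r) (⟨r - 1, by omega⟩ : Fin r) →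
      pact u (weylδ r) - pact w (weylδ r) = (-((r : ℚ) - 1)) • pact w (hroot r)) := by
  have hz : (⟨0, by omega⟩ : Fin r) ≠ (⟨r - 1, by omega⟩ : Fin r) :=
    Fin.ne_of_val_ne (by simp; omega)
  constructor
  · constructor
    · rintro ⟨β, hβ, heq⟩
      set σ := u⁻¹ * w with hσ
      have hP : ∀ j : Fin r, σ j = j ∨
          (σ j = (⟨0, by omega⟩ : Fin r) ∧ j = (⟨r - 1, by omega⟩ : Fin r)) ∨
          (σ j = (⟨r - 1, by omega⟩ : Fin r) ∧ j = (⟨0, by omega⟩ : Fin r)) := by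
        intro j
        obtain ⟨m, hm⟩ := hβ.2 (w j)
        have hc := congrFun heq (w j)
        simp only [Pi.sub_apply, Pi.smul_apply, smul_eq_mul, pact] at hc
        rw [hm, (show w⁻¹ (w j) = j from w.symm_apply_apply j)] at hc
        have hu : u⁻¹ (w j) = σ j := rfl
        rw [hu] at hc
        have hQ : ((j : ℕ) : ℚ) - (((σ j : Fin r) : ℕ) : ℚ) = ((r : ℚ) - 1) * m := by
          simp only [weylδ] at hc; linarith
        have hZ : ((j : ℕ) : ℤ) - (((σ j : Fin r) : ℕ) : ℤ) = ((r : ℤ) - 1) * m := by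
          exact_mod_cast hQ
        have hk := keyint ((r : ℤ) - 1) (((σ j : Fin r) : ℕ) : ℤ) ((j : ℕ) : ℤ) m
          (by omega) (by positivity) (by have := (σ j).isLt; omega)
          (by positivity) (by have := j.isLt; omega) hZ
        rcases hk with h1 | ⟨h1, h2⟩ | ⟨h1, h2⟩
        · left; exact Fin.ext (by exact_mod_cast h1)
        · right; left
          exact ⟨Fin.ext (by simp; omega), Fin.ext (by simp; omega)⟩
        · right; right
          exact ⟨Fin.ext (by simp; omega), Fin.ext (by simp; omega)⟩
      rcases sigma_cases σ _ _ hz hP with hs | hs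
      · left; exact inv_mul_eq_one.mp hs
      · right
        have hw : w = u * Equiv.swap (⟨0, by omega⟩ : Fin r) (⟨r - 1, by omega⟩ : Fin r) :=
          inv_mul_eq_iff_eq_mul.mp hs
        rw [hw, mul_assoc, Equiv.swap_mul_self, mul_one]
    · rintro (rfl | h)
      · exact ⟨0, ⟨by simp [memV], fun i => ⟨0, rfl⟩⟩, by simp⟩
      · refine ⟨-pact w (hroot r), memQ_neg_hroot r hr w, ?_⟩
        rw [h, moreover r hr w, smul_neg, ← neg_smul]
  · intro h
    rw [h]
    exact moreover r hr w
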